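/- Let f : [a,b] → ℝ be convex, x ∈ [a,b]^n, and p nonnegative with ∑pᵢ = 1. With uniform weights qᵢ = 1/n and m₁ = n·min_i pᵢ, define p'ᵢ = pᵢ − m₁/n and x'ᵢ = xᵢ at non-minimizing indices, and p'ᵢ = m₁/s, x'ᵢ = (1/n)∑ⱼxⱼ at the s minimizing indices; let m₂ = n·min_i p'ᵢ. Then ∑pᵢf(xᵢ) − f(∑pᵢxᵢ) ≥ m₁·[(1/n)∑f(xᵢ) − f((1/n)∑xᵢ)] + m₂·[(1/n)∑f(x'ᵢ) − f((1/n)∑x'ᵢ)]. -/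

import Mathlib

open Finset

lemma mean_mem_Icc {a b : ℝ} {n : ℕ} (hn : 0 < n) (x : Fin n → ℝ)
    (hx : ∀ i, x i ∈ Set.Icc a b) : (1 / (n : ℝ)) * ∑ i, x i ∈ Set.Icc a b := by
  have hn' : (0 : ℝ) < n := by exact_mod_cast hn
  have hinv : (1 / (n : ℝ)) * n = 1 := by field_simp
  have hpos : (0 : ℝ) < 1 / (n : ℝ) := by positivity
  have h1 : (n : ℝ) * a ≤ ∑ i, x i := by
    calc (n : ℝ) * a = ∑ _i : Fin n, a := by simp [mul_comm]
      _ ≤ ∑ i, x i := Finset.sum_le_sum fun i _ => (hx i).1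
  have h2 : ∑ i, x i ≤ (n : ℝ) * b := by
    calc ∑ i, x i ≤ ∑ _i : Fin n, b := Finset.sum_le_sum fun i _ => (hx i).2
      _ = (n : ℝ) * b := by simp [mul_comm]
  have ha : (1 / (n : ℝ)) * ((n : ℝ) * a) = a := by field_simp
  have hb : (1 / (n : ℝ)) * ((n : ℝ) * b) = b := by field_simp
  constructor
  · linarith [mul_le_mul_of_nonneg_left h1 hpos.le, ha]
  · linarith [mul_le_mul_of_nonneg_left h2 hpos.le, hb]

lemma jensen_gap_aux {a b : ℝ} (f : ℝ → ℝ) (hf : ConvexOn ℝ (Set.Icc a b) f)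
    {n : ℕ} (hn : 0 < n) (x : Fin n → ℝ) (hx : ∀ i, x i ∈ Set.Icc a b)
    (p : Fin n → ℝ) (hps : ∑ i, p i = 1)
    (ν : ℝ) (hν : ∀ i, ν ≤ p i) (hν0 : 0 ≤ ν) :
    ∑ i, p i * f (x i) - f (∑ i, p i * x i) ≥
      ((n : ℝ) * ν) * ((1 / (n : ℝ)) * ∑ i, f (x i) - f ((1 / (n : ℝ)) * ∑ i, x i)) := by
  have hn' : (0 : ℝ) < n := by exact_mod_cast hn
  set xb := (1 / (n : ℝ)) * ∑ i, x i with hxbdef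
  have hxb : xb ∈ Set.Icc a b := mean_mem_Icc hn x hx
  have hr : ∀ i, (0 : ℝ) ≤ p i - ν := fun i => sub_nonneg.mpr (hν i)
  have hRsum : ∑ i, (p i - ν) = 1 - (n : ℝ) * ν := by
    rw [Finset.sum_sub_distrib, hps]; simp [mul_comm]
  set R := 1 - (n : ℝ) * ν with hRdef
  have hR0 : 0 ≤ R := by rw [← hRsum]; exact Finset.sum_nonneg fun i _ => hr i
  rcases eq_or_lt_of_le hR0 with hR | hR
  · -- R = 0 : all weights equal ν = 1/n
    have h0 : ∑ i, (p i - ν) = 0 := by rw [hRsum, ← hR]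
    have hall : ∀ i, p i = ν := by
      intro i
      have := (Finset.sum_eq_zero_iff_of_nonneg (fun i _ => hr i)).1 h0 i (Finset.mem_univ i)
      linarith
    have hnν : (n : ℝ) * ν = 1 := by rw [hRdef] at hR; linarith
    have hν1 : ν = 1 / (n : ℝ) := by field_simp; linarith
    have h1 : ∑ i, p i * f (x i) = ν * ∑ i, f (x i) := by
      rw [Finset.mul_sum]; exact Finset.sum_congr rfl fun i _ => by rw [hall i]
    have h2 : ∑ i, p i * x i = ν * ∑ i, x i := by
      rw [Finset.mul_sum]; exact Finset.sum_congr rfl fun i _ => by rw [hall i]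
    rw [h1, h2, hnν, hν1, hxbdef]
    ring_nf
    exact le_refl _
  · -- R > 0
    set w := fun i => (p i - ν) / R with hwdef
    have hw0 : ∀ i, 0 ≤ w i := fun i => div_nonneg (hr i) hR.le
    have hwsum : ∑ i, w i = 1 := by
      simp only [hwdef]
      rw [← Finset.sum_div, hRsum, div_self hR.ne']
    set y := ∑ i, w i * x i with hydef
    have hy : y ∈ Set.Icc a b := by
      have := (convex_Icc a b).sum_mem (fun i (_ : i ∈ Finset.univ) => hw0 i) hwsum
        (fun i _ => hx i)
      simpa [hydef, smul_eq_mul] using this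
    have hfy : f y ≤ ∑ i, w i * f (x i) := by
      have := hf.map_sum_le (fun i (_ : i ∈ Finset.univ) => hw0 i) hwsum (fun i _ => hx i)
      simpa [hydef, smul_eq_mul] using this
    have hRy : R * y = ∑ i, (p i - ν) * x i := by
      rw [hydef, Finset.mul_sum]
      refine Finset.sum_congr rfl fun i _ => ?_
      simp only [hwdef]; field_simp
    have hnx : ((n : ℝ) * ν) * xb = ν * ∑ i, x i := by
      rw [hxbdef]; field_simp
    have hsplit : ∑ i, p i * x i = ((n : ℝ) * ν) * xb + R * y := by
      rw [hRy, hnx, Finset.mul_sum, ← Finset.sum_add_distrib]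
      exact Finset.sum_congr rfl fun i _ => by ring
    have hconv : f (∑ i, p i * x i) ≤ ((n : ℝ) * ν) * f xb + R * f y := by
      rw [hsplit]
      have h := hf.2 hxb hy (by positivity : (0 : ℝ) ≤ (n : ℝ) * ν) hR.le
        (by rw [hRdef]; ring)
      simpa [smul_eq_mul] using h
    have hRfy : R * f y ≤ ∑ i, (p i - ν) * f (x i) := by
      calc R * f y ≤ R * ∑ i, w i * f (x i) := mul_le_mul_of_nonneg_left hfy hR.le
        _ = ∑ i, (p i - ν) * f (x i) := by
            rw [Finset.mul_sum]
            refine Finset.sum_congr rfl fun i _ => ?_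
            simp only [hwdef]; field_simp
    have hpf : ∑ i, p i * f (x i) = ν * ∑ i, f (x i) + ∑ i, (p i - ν) * f (x i) := by
      rw [Finset.mul_sum, ← Finset.sum_add_distrib]
      exact Finset.sum_congr rfl fun i _ => by ring
    have hexp : ((n : ℝ) * ν) * ((1 / (n : ℝ)) * ∑ i, f (x i) - f xb)
        = ν * ∑ i, f (x i) - ((n : ℝ) * ν) * f xb := by
      field_simp
    linarith [hconv, hRfy]

/-- The `N = 2` case of Theorem 2 with uniform weights `q = (1/n,…,1/n)`:
the Jensen gap with weights `p` dominates a two-term sum of scaled uniform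
Jensen gaps, with `m₁ = n·minᵢ pᵢ`, `m₂ = n·minᵢ p'ᵢ`. -/
theorem stmt19 {a b : ℝ} (f : ℝ → ℝ) (hf : ConvexOn ℝ (Set.Icc a b) f)
    {n : ℕ} (hn : 0 < n) (x : Fin n → ℝ) (hx : ∀ i, x i ∈ Set.Icc a b)
    (p : Fin n → ℝ) (hp : ∀ i, 0 ≤ p i) (hps : ∑ i, p i = 1)
    (m₁ : ℝ)
    (hm₁ : m₁ = n * Finset.univ.inf' ⟨⟨0, hn⟩, Finset.mem_univ _⟩ p)
    (s : ℕ)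
    (hs : s = (Finset.univ.filter
      (fun i => p i = Finset.univ.inf' ⟨⟨0, hn⟩, Finset.mem_univ _⟩ p)).card)
    (p' x' : Fin n → ℝ)
    (hp' : ∀ i, p' i =
      if p i = Finset.univ.inf' ⟨⟨0, hn⟩, Finset.mem_univ _⟩ p then m₁ / (s : ℝ)
      else p i - m₁ / (n : ℝ))
    (hx' : ∀ i, x' i =
      if p i = Finset.univ.inf' ⟨⟨0, hn⟩, Finset.mem_univ _⟩ p then
        (1 / (n : ℝ)) * ∑ j, x j
      else x i)
    (m₂ : ℝ)
    (hm₂ : m₂ = n * Finset.univ.inf' ⟨⟨0, hn⟩, Finset.mem_univ _⟩ p') :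
    ∑ i, p i * f (x i) - f (∑ i, p i * x i) ≥
      m₁ * ((1 / (n : ℝ)) * ∑ i, f (x i) - f ((1 / (n : ℝ)) * ∑ i, x i)) +
      m₂ * ((1 / (n : ℝ)) * ∑ i, f (x' i) - f ((1 / (n : ℝ)) * ∑ i, x' i)) := by
  have hn' : (0 : ℝ) < n := by exact_mod_cast hn
  set μ := Finset.univ.inf' ⟨⟨0, hn⟩, Finset.mem_univ _⟩ p with hμdef
  have hμle : ∀ i, μ ≤ p i := fun i => Finset.inf'_le _ (Finset.mem_univ i)
  obtain ⟨i₀, -, hi₀⟩ := Finset.exists_mem_eq_inf' (⟨⟨0, hn⟩, Finset.mem_univ _⟩ :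
    (Finset.univ : Finset (Fin n)).Nonempty) p
  have hiμ : μ = p i₀ := hμdef.trans hi₀
  have hμ0 : 0 ≤ μ := by rw [hiμ]; exact hp i₀
  have hs0 : 0 < s := by
    rw [hs]
    exact Finset.card_pos.mpr ⟨i₀, Finset.mem_filter.mpr ⟨Finset.mem_univ _, hiμ.symm⟩⟩
  have hs' : (0 : ℝ) < s := by exact_mod_cast hs0
  have hm₁n : m₁ / (n : ℝ) = μ := by rw [hm₁]; field_simp
  have hm₁0 : 0 ≤ m₁ := by rw [hm₁]; positivity
  set xb := (1 / (n : ℝ)) * ∑ j, x j with hxbdef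
  have hxb : xb ∈ Set.Icc a b := mean_mem_Icc hn x hx
  -- key identity for an arbitrary function g
  have key : ∀ g : ℝ → ℝ, ∑ i, p' i * g (x' i)
      = (∑ i, p i * g (x i)) - μ * (∑ i, g (x i)) + m₁ * g xb := by
    intro g
    have h1 : ∀ i, p' i * g (x' i) =
        (if p i = μ then (m₁ / (s : ℝ)) * g xb else 0)
        + (p i * g (x i) - μ * g (x i)) := by
      intro i
      rw [hp' i, hx' i]
      by_cases h : p i = μ
      · simp only [if_pos h]; rw [h]; ring
      · simp only [if_neg h]; rw [← hm₁n]; ring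
    have hA : (∑ i, if p i = μ then (m₁ / (s : ℝ)) * g xb else 0) = m₁ * g xb := by
      rw [← Finset.sum_filter, Finset.sum_const, nsmul_eq_mul, ← hs]
      field_simp
    calc ∑ i, p' i * g (x' i)
        = ∑ i, ((if p i = μ then (m₁ / (s : ℝ)) * g xb else 0)
            + (p i * g (x i) - μ * g (x i))) :=
          Finset.sum_congr rfl fun i _ => h1 i
      _ = (∑ i, if p i = μ then (m₁ / (s : ℝ)) * g xb else 0)
            + ∑ i, (p i * g (x i) - μ * g (x i)) := Finset.sum_add_distrib
      _ = (∑ i, p i * g (x i)) - μ * (∑ i, g (x i)) + m₁ * g xb := by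
          rw [hA, Finset.sum_sub_distrib, Finset.mul_sum]; ring
  have hp'0 : ∀ i, 0 ≤ p' i := by
    intro i; rw [hp' i]
    by_cases h : p i = μ
    · rw [if_pos h]; positivity
    · rw [if_neg h, hm₁n]; linarith [hμle i]
  have hp's : ∑ i, p' i = 1 := by
    have hk := key (fun _ => 1)
    simp only [mul_one] at hk
    have hsum1 : ∑ _i : Fin n, (1 : ℝ) = n := by simp
    rw [hsum1, hps] at hk
    rw [hk, hm₁]; ring
  have hx'mem : ∀ i, x' i ∈ Set.Icc a b := by
    intro i; rw [hx' i]
    by_cases h : p i = μ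
    · rw [if_pos h]; exact hxb
    · rw [if_neg h]; exact hx i
  -- the means coincide
  have hkid := key id
  simp only [id_eq] at hkid
  have hμn : m₁ * xb = μ * ∑ i, x i := by rw [hm₁, hxbdef]; field_simp
  have hpx : ∑ i, p' i * x' i = ∑ i, p i * x i := by rw [hkid, hμn]; ring
  -- apply the auxiliary lemma to (p', x')
  set ν' := Finset.univ.inf' ⟨⟨0, hn⟩, Finset.mem_univ _⟩ p' with hν'def
  have hν'le : ∀ i, ν' ≤ p' i := fun i => Finset.inf'_le _ (Finset.mem_univ i)
  obtain ⟨j₀, -, hj₀⟩ := Finset.exists_mem_eq_inf' (⟨⟨0, hn⟩, Finset.mem_univ _⟩ :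
    (Finset.univ : Finset (Fin n)).Nonempty) p'
  have hjν : ν' = p' j₀ := hν'def.trans hj₀
  have hν'0 : 0 ≤ ν' := by rw [hjν]; exact hp'0 j₀
  have haux := jensen_gap_aux f hf hn x' hx'mem p' hp's ν' hν'le hν'0
  rw [hpx, key f, ← hm₂] at haux
  have hexp : m₁ * ((1 / (n : ℝ)) * ∑ i, f (x i) - f xb)
      = μ * ∑ i, f (x i) - m₁ * f xb := by
    rw [hm₁]; field_simp
  linarith [haux, hexp]
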